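/- Let λ ≥ 0 be a weight and let p, q : Fin N → ℝ be profiles with 0 ≤ p_d, q_d ≤ 1 and ∑_d p_d = ∑_d q_d. For u ∈ [0,1] define r(u) := (1−u)·q + u·p. Suppose the seat total S₀ minimizes Φ_{r(0)}(·; λ) = Φ_q(·; λ) over {0,…,N} but does not minimize Φ_{r(1)}(·; λ) = Φ_p(·; λ). Then there exist u* ∈ [0,1] and a seat total S' ≠ S₀ such that both S₀ and S' minimize Φ_{r(u*)}(·; λ) over {0,…,N}. -/

import Mathlib

open Finset

/-- Sum of the `S` largest entries of the vote-share profile `p`. -/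
noncomputable def topSum {N : ℕ} (p : Fin N → ℝ) (S : ℕ) : ℝ :=
  ∑ i : Fin N, if (i : ℕ) < S then p (Tuple.sort p i.rev) else 0

/-- `ordStat p i` is the `(i+1)`-th largest entry of `p` (so `ordStat p ⟨S-1,_⟩` is `p_(S)`). -/
noncomputable def ordStat {N : ℕ} (p : Fin N → ℝ) (i : Fin N) : ℝ :=
  p (Tuple.sort p i.rev)

/-- Total misrepresentation `Φ_p(S; w) = S + a − 2·Γ_p(S) + w·|a − S|` of a top-`S`
allocation at weight `w`, where `a = ∑ d, p d`. -/
noncomputable def PhiS {N : ℕ} (p : Fin N → ℝ) (S : ℕ) (w : ℝ) : ℝ :=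
  (S : ℝ) + (∑ d, p d) - 2 * topSum p S + w * |(∑ d, p d) - (S : ℝ)|

lemma strictMono_val_le {S M : ℕ} (g : Fin S → Fin M) (hg : StrictMono g) :
    ∀ m (h : m < S), m ≤ (g ⟨m, h⟩ : ℕ) := by
  intro m
  induction m with
  | zero => intro h; exact Nat.zero_le _
  | succ n ih =>
      intro h
      have h' : n < S := by omega
      have h1 : (g ⟨n, h'⟩ : ℕ) < (g ⟨n+1, h⟩ : ℕ) := hg (by simp [Fin.lt_def])
      have h2 := ih h'
      omega

lemma filter_lt_eq_map {N S : ℕ} (hS : S ≤ N) :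
    (Finset.univ.filter (fun i : Fin N => (i : ℕ) < S)) =
      Finset.map (Fin.castLEOrderEmb hS).toEmbedding Finset.univ := by
  ext i
  simp only [Finset.mem_filter, Finset.mem_univ, true_and, Finset.mem_map]
  constructor
  · intro h
    exact ⟨⟨(i : ℕ), h⟩, by ext; rfl⟩
  · rintro ⟨j, -, rfl⟩
    exact j.isLt

lemma topSum_eq_sum_filter {N : ℕ} (p : Fin N → ℝ) (S : ℕ) :
    topSum p S = ∑ i ∈ Finset.univ.filter (fun i : Fin N => (i : ℕ) < S),
      p (Tuple.sort p i.rev) := by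
  rw [topSum, Finset.sum_ite, Finset.sum_const_zero, add_zero]

lemma topSum_eq_sum_fin {N : ℕ} (p : Fin N → ℝ) (S : ℕ) (hS : S ≤ N) :
    topSum p S = ∑ k : Fin S, p (Tuple.sort p (Fin.castLE hS k).rev) := by
  rw [topSum_eq_sum_filter, filter_lt_eq_map hS, Finset.sum_map]
  rfl

/-- The top-S sum is attained by some S-element subset. -/
lemma topSum_exists_set {N : ℕ} (p : Fin N → ℝ) (S : ℕ) (hS : S ≤ N) :
    ∃ A : Finset (Fin N), A.card = S ∧ topSum p S = ∑ i ∈ A, p i := by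
  classical
  set g : Fin N → Fin N := fun i => Tuple.sort p i.rev with hg
  have hginj : Function.Injective g := by
    intro a b hab
    have := (Tuple.sort p).injective hab
    exact Fin.rev_injective this
  refine ⟨(Finset.univ.filter (fun i : Fin N => (i : ℕ) < S)).image g, ?_, ?_⟩
  · rw [Finset.card_image_of_injective _ hginj, filter_lt_eq_map hS, Finset.card_map,
      Finset.card_univ, Fintype.card_fin]
  · rw [Finset.sum_image (fun a _ b _ h => hginj h), topSum_eq_sum_filter]

/-- The top-S sum dominates the sum over any S-element subset. -/
lemma sum_le_topSum {N : ℕ} (p : Fin N → ℝ) (S : ℕ) (hS : S ≤ N)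
    (A : Finset (Fin N)) (hA : A.card = S) : ∑ i ∈ A, p i ≤ topSum p S := by
  classical
  set σ := Tuple.sort p with hσ
  set f : Fin N → ℝ := p ∘ σ with hf
  have hfm : Monotone f := Tuple.monotone_sort p
  -- rewrite the A-sum via σ⁻¹
  set B : Finset (Fin N) := A.image σ.symm with hB
  have hBcard : B.card = S := by
    rw [hB, Finset.card_image_of_injective _ σ.symm.injective, hA]
  have hsumB : ∑ j ∈ B, f j = ∑ i ∈ A, p i := by
    rw [hB, Finset.sum_image (fun a _ b _ h => σ.symm.injective h)]
    refine Finset.sum_congr rfl fun i _ => ?_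
    simp [hf, hσ]
  set e := B.orderEmbOfFin hBcard with he
  have hsumE : ∑ j ∈ B, f j = ∑ k : Fin S, f (e k) := by
    refine (Finset.sum_bij (fun (k : Fin S) _ => e k) ?_ ?_ ?_ ?_).symm
    · intro k _; exact B.orderEmbOfFin_mem hBcard k
    · intro a _ b _ h; exact e.injective h
    · intro j hj
      have : j ∈ Set.range e := by
        rw [Finset.range_orderEmbOfFin]; exact hj
      obtain ⟨k, hk⟩ := this
      exact ⟨k, Finset.mem_univ _, hk⟩
    · intro k _; rfl
  -- key index bound : (e k : ℕ) ≤ N - S + k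
  have hkey : ∀ k : Fin S, (e k : ℕ) ≤ N - S + k := by
    intro k
    set e' : Fin S → Fin N := fun k => (e k.rev).rev with he'
    have he'm : StrictMono e' := by
      intro a b hab
      have h1 : b.rev < a.rev := Fin.rev_lt_rev.mpr hab
      have h2 : e b.rev < e a.rev := e.strictMono h1
      exact Fin.rev_lt_rev.mpr h2
    have hb := strictMono_val_le e' he'm k.rev k.rev.isLt
    have h3 : (e' ⟨(k.rev : ℕ), k.rev.isLt⟩ : ℕ) = N - 1 - (e k : ℕ) := by
      have : (⟨(k.rev : ℕ), k.rev.isLt⟩ : Fin S) = k.rev := rfl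
      rw [this, he']
      simp [Fin.rev_rev, Fin.val_rev]
      omega
    have h4 : (k.rev : ℕ) = S - 1 - (k : ℕ) := by
      simp [Fin.val_rev]; omega
    have h5 : (e k : ℕ) < N := (e k).isLt
    have h6 : (k : ℕ) < S := k.isLt
    omega
  -- the top block
  have htop : topSum p S = ∑ k : Fin S, f (⟨N - S + k, by omega⟩ : Fin N) := by
    rw [topSum_eq_sum_fin p S hS]
    rw [← (Fin.revPerm (n := S)).sum_comp _ _ (by simp)]
    refine Finset.sum_congr rfl fun k _ => ?_
    have : (Fin.castLE hS (Fin.revPerm k)).rev = (⟨N - S + k, by omega⟩ : Fin N) := by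
      ext
      simp [Fin.val_rev]
      omega
    rw [this]
    rfl
  rw [← hsumB, hsumE, htop]
  refine Finset.sum_le_sum fun k _ => hfm ?_
  exact hkey k
/-- Lipschitz-type bound for `topSum`. -/
lemma topSum_sub_le {N : ℕ} (p p' : Fin N → ℝ) (S : ℕ) (hS : S ≤ N) :
    topSum p S - topSum p' S ≤ ∑ d, |p d - p' d| := by
  obtain ⟨A, hA, hAsum⟩ := topSum_exists_set p S hS
  have h1 : ∑ i ∈ A, p' i ≤ topSum p' S := sum_le_topSum p' S hS A hA
  have h2 : ∑ i ∈ A, p i ≤ ∑ i ∈ A, p' i + ∑ i ∈ A, |p i - p' i| := by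
    rw [← Finset.sum_add_distrib]
    refine Finset.sum_le_sum fun i _ => ?_
    have := le_abs_self (p i - p' i)
    linarith
  have h3 : ∑ i ∈ A, |p i - p' i| ≤ ∑ d, |p d - p' d| :=
    Finset.sum_le_sum_of_subset_of_nonneg (Finset.subset_univ A)
      (fun i _ _ => abs_nonneg _)
  rw [hAsum]
  linarith

lemma abs_topSum_sub_le {N : ℕ} (p p' : Fin N → ℝ) (S : ℕ) (hS : S ≤ N) :
    |topSum p S - topSum p' S| ≤ ∑ d, |p d - p' d| := by
  rw [abs_sub_le_iff]
  constructor
  · exact topSum_sub_le p p' S hS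
  · have := topSum_sub_le p' p S hS
    calc topSum p' S - topSum p S ≤ ∑ d, |p' d - p d| := this
      _ = ∑ d, |p d - p' d| := by
          refine Finset.sum_congr rfl fun d _ => abs_sub_comm _ _

theorem stmt19 (N : ℕ) (hN : 3 ≤ N) (lam : ℝ) (hlam : 0 ≤ lam)
    (p q : Fin N → ℝ)
    (hp : ∀ d, 0 ≤ p d ∧ p d ≤ 1) (hq : ∀ d, 0 ≤ q d ∧ q d ≤ 1)
    (hsum : (∑ d, p d) = ∑ d, q d)
    (S₀ : ℕ) (hS₀ : S₀ ≤ N)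
    (hminq : ∀ S' ≤ N, PhiS q S₀ lam ≤ PhiS q S' lam)
    (hnotp : ¬ ∀ S' ≤ N, PhiS p S₀ lam ≤ PhiS p S' lam) :
    ∃ u : ℝ, 0 ≤ u ∧ u ≤ 1 ∧
      ∃ S' ≤ N, S' ≠ S₀ ∧
        (∀ S'' ≤ N, PhiS (fun d => (1 - u) * q d + u * p d) S₀ lam ≤
          PhiS (fun d => (1 - u) * q d + u * p d) S'' lam) ∧
        (∀ S'' ≤ N, PhiS (fun d => (1 - u) * q d + u * p d) S' lam ≤
          PhiS (fun d => (1 - u) * q d + u * p d) S'' lam) := by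
  classical
  set r : ℝ → Fin N → ℝ := fun u d => (1 - u) * q d + u * p d with hr
  have hr0 : r 0 = q := by funext d; simp [hr]
  have hr1 : r 1 = p := by funext d; simp [hr]
  -- the total is constant along the segment
  have hrsum : ∀ u, ∑ d, r u d = ∑ d, q d := by
    intro u
    simp only [hr]
    rw [Finset.sum_add_distrib, ← Finset.mul_sum, ← Finset.mul_sum, hsum]
    ring
  set a : ℝ := ∑ d, q d with ha
  set F : ℕ → ℝ → ℝ := fun S u => PhiS (r u) S lam with hF
  have hFeq : ∀ S u, F S u = (S : ℝ) + a - 2 * topSum (r u) S + lam * |a - (S : ℝ)| := by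
    intro S u
    simp only [hF, PhiS, hrsum u, ha]
  -- continuity of F S for S ≤ N
  have hFcont : ∀ S, S ≤ N → Continuous (F S) := by
    intro S hS
    have hfun : F S = fun u => (S : ℝ) + a - 2 * topSum (r u) S + lam * |a - (S : ℝ)| := by
      funext u; exact hFeq S u
    rw [hfun]
    have htop : Continuous (fun u => topSum (r u) S) := by
      set C : NNReal := (∑ d, |p d - q d|).toNNReal with hC
      refine LipschitzWith.continuous (K := C) ?_
      refine LipschitzWith.of_dist_le_mul fun u v => ?_
      have hdiff : ∀ d, r u d - r v d = (u - v) * (p d - q d) := by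
        intro d; simp only [hr]; ring
      have h1 : |topSum (r u) S - topSum (r v) S| ≤ ∑ d, |r u d - r v d| :=
        abs_topSum_sub_le (r u) (r v) S hS
      have h2 : ∑ d, |r u d - r v d| = |u - v| * ∑ d, |p d - q d| := by
        rw [Finset.mul_sum]
        refine Finset.sum_congr rfl fun d _ => ?_
        rw [hdiff d, abs_mul]
      have h3 : (C : ℝ) = ∑ d, |p d - q d| := by
        rw [hC, Real.coe_toNNReal]
        exact Finset.sum_nonneg fun d _ => abs_nonneg _
      rw [Real.dist_eq, Real.dist_eq]
      calc |topSum (r u) S - topSum (r v) S| ≤ ∑ d, |r u d - r v d| := h1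
        _ = |u - v| * ∑ d, |p d - q d| := h2
        _ = (C : ℝ) * |u - v| := by rw [h3]; ring
    fun_prop
  -- the set where S₀ is a minimizer
  set Z : Set ℝ := Set.Icc (0:ℝ) 1 ∩ ⋂ (S : ℕ) (_ : S ≤ N), {u | F S₀ u ≤ F S u} with hZ
  have hZclosed : IsClosed Z := by
    refine IsClosed.inter isClosed_Icc ?_
    refine isClosed_iInter fun S => isClosed_iInter fun hS => ?_
    exact isClosed_le (hFcont S₀ hS₀) (hFcont S hS)
  have hZ0 : (0:ℝ) ∈ Z := by
    constructor
    · exact ⟨le_refl 0, zero_le_one⟩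
    · simp only [Set.mem_iInter, Set.mem_setOf_eq]
      intro S hS
      simp only [hF, hr0]
      exact hminq S hS
  have hZ1 : (1:ℝ) ∉ Z := by
    intro h
    refine hnotp fun S hS => ?_
    have := h.2
    simp only [Set.mem_iInter, Set.mem_setOf_eq] at this
    have := this S hS
    simpa only [hF, hr1] using this
  have hZbdd : BddAbove Z := ⟨1, fun u hu => hu.1.2⟩
  set u₀ : ℝ := sSup Z with hu₀
  have hu₀mem : u₀ ∈ Z := hZclosed.csSup_mem ⟨0, hZ0⟩ hZbdd
  have hu₀le : u₀ ≤ 1 := hu₀mem.1.2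
  have hu₀lt : u₀ < 1 := lt_of_le_of_ne hu₀le (fun h => hZ1 (h ▸ hu₀mem))
  have hu₀min : ∀ S ≤ N, F S₀ u₀ ≤ F S u₀ := by
    intro S hS
    have := hu₀mem.2
    simp only [Set.mem_iInter, Set.mem_setOf_eq] at this
    exact this S hS
  -- find a tie at u₀
  by_cases htie : ∃ S' ≤ N, S' ≠ S₀ ∧ F S' u₀ ≤ F S₀ u₀
  · obtain ⟨S', hS'N, hS'ne, hS'le⟩ := htie
    refine ⟨u₀, hu₀mem.1.1, hu₀le, S', hS'N, hS'ne, hu₀min, ?_⟩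
    intro S'' hS''
    exact hS'le.trans (hu₀min S'' hS'')
  · -- strict minimum at u₀: it persists slightly to the right, contradiction
    exfalso
    push_neg at htie
    have hstrict : ∀ S' ∈ (Finset.range (N+1)).erase S₀, F S₀ u₀ < F S' u₀ := by
      intro S' hS'
      rw [Finset.mem_erase, Finset.mem_range] at hS'
      exact htie S' (by omega) hS'.1
    have hev : ∀ᶠ u in nhds u₀, ∀ S' ∈ (Finset.range (N+1)).erase S₀, F S₀ u < F S' u := by
      rw [Filter.eventually_all_finset]
      intro S' hS'
      have hS'N : S' ≤ N := by
        have := Finset.mem_range.mp (Finset.mem_of_mem_erase hS'); omega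
      exact ContinuousAt.eventually_lt (hFcont S₀ hS₀).continuousAt
        (hFcont S' hS'N).continuousAt (hstrict S' hS')
    have hIoo : Set.Ioo u₀ 1 ∈ nhdsWithin u₀ (Set.Ioi u₀) :=
      Ioo_mem_nhdsGT_of_mem ⟨le_refl _, hu₀lt⟩
    have hev' : ∀ᶠ u in nhdsWithin u₀ (Set.Ioi u₀),
        (∀ S' ∈ (Finset.range (N+1)).erase S₀, F S₀ u < F S' u) ∧ u ∈ Set.Ioo u₀ 1 := by
      exact Filter.Eventually.and (nhdsWithin_le_nhds hev) hIoo
    obtain ⟨u, hu1, hu2⟩ := hev'.exists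
    have huZ : u ∈ Z := by
      constructor
      · exact ⟨(hu₀mem.1.1).trans hu2.1.le, hu2.2.le⟩
      · simp only [Set.mem_iInter, Set.mem_setOf_eq]
        intro S hS
        rcases eq_or_ne S S₀ with h | h
        · rw [h]
        · exact (hu1 S (Finset.mem_erase.mpr ⟨h, Finset.mem_range.mpr (by omega)⟩)).le
    have : u ≤ u₀ := le_csSup hZbdd huZ
    exact absurd hu2.1 (not_lt.mpr this)
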